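/- Let d ≥ 1 and p ∈ (0,1). Let U_{0,1}, …, U_{0,d}, U_{1,1}, …, U_{1,d} be i.i.d. random variables uniformly distributed on [0,1], and let I = (I_1, …, I_d) be a {0,1}^d-valued random vector independent of all the uniforms. Then for every x ∈ ℝ, P(Σ_{j=1}^d U_{0,j}^{1−p} U_{1,j}^{I_j} ≤ x) = Σ_{k=0}^d P(Σ_{j=1}^d I_j = k) · P(Σ_{j=1}^{k} U_{0,j}^{1−p} U_{1,j} + Σ_{j=k+1}^{d} U_{0,j}^{1−p} ≤ x), where empty sums are taken to be 0. -/

import Mathlib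

open MeasureTheory ProbabilityTheory

open Finset

namespace GFGMAux

/-- The sum functional on the pi space, parametrized by a Bernoulli vector `b`. -/
noncomputable def F (d : ℕ) (p : ℝ) (b : Fin d → Bool) : (Bool × Fin d → ℝ) → ℝ :=
  fun u => ∑ j, u (false, j) ^ (1 - p) * (if b j then u (true, j) else 1)

lemma measurable_F (d : ℕ) (p : ℝ) (hp : 0 ≤ 1 - p) (b : Fin d → Bool) :
    Measurable (F d p b) := by
  apply Finset.measurable_sum
  intro j _
  refine (((Real.continuous_rpow_const hp).measurable).comp (measurable_pi_apply _)).mul ?_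
  by_cases h : b j
  · simpa [h] using measurable_pi_apply (true, j)
  · simpa [h] using measurable_const

lemma card_filter_lt (d k : ℕ) (hk : k ≤ d) :
    (univ.filter fun j : Fin d => (j : ℕ) < k).card = k := by
  have h : ∀ m ∈ Finset.range k, m < d := fun m hm =>
    lt_of_lt_of_le (Finset.mem_range.1 hm) hk
  have he : (univ.filter fun j : Fin d => (j : ℕ) < k) = (Finset.range k).attachFin h := by
    ext j; simp [Finset.mem_attachFin]
  rw [he, Finset.card_attachFin, Finset.card_range]

lemma exists_perm (d k : ℕ) (b : Fin d → Bool)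
    (hk : (univ.filter fun j => b j = true).card = k) :
    ∃ σ : Equiv.Perm (Fin d), ∀ j, (((σ j : Fin d) : ℕ) < k ↔ b j = true) := by
  classical
  have hkd : k ≤ d := by
    rw [← hk]
    simpa using Finset.card_filter_le univ (fun j => b j = true)
  have h1 : Fintype.card {j : Fin d // b j = true}
      = Fintype.card {j : Fin d // (j : ℕ) < k} := by
    rw [Fintype.card_subtype, Fintype.card_subtype, hk, card_filter_lt d k hkd]
  have h2 : Fintype.card {j : Fin d // ¬ (b j = true)}
      = Fintype.card {j : Fin d // ¬ ((j : ℕ) < k)} := by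
    rw [Fintype.card_subtype_compl, Fintype.card_subtype_compl,
      Fintype.card_subtype, Fintype.card_subtype, hk, card_filter_lt d k hkd]
  let e := Fintype.equivOfCardEq h1
  let f := Fintype.equivOfCardEq h2
  refine ⟨(Equiv.sumCompl (fun j : Fin d => b j = true)).symm.trans
    ((e.sumCongr f).trans (Equiv.sumCompl (fun j : Fin d => (j : ℕ) < k))), fun j => ?_⟩
  by_cases hb : b j = true
  · simp only [Equiv.trans_apply, Equiv.sumCompl_symm_apply_of_pos hb,
      Equiv.sumCongr_apply, Sum.map_inl, Equiv.sumCompl_apply_inl]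
    simpa [hb] using (e ⟨j, hb⟩).2
  · simp only [Equiv.trans_apply, Equiv.sumCompl_symm_apply_of_neg hb,
      Equiv.sumCongr_apply, Sum.map_inr, Equiv.sumCompl_apply_inr]
    simpa [hb] using (f ⟨j, hb⟩).2

lemma pi_measure_F_eq (d : ℕ) (p x : ℝ) (hp : 0 ≤ 1 - p) (ν : Measure ℝ) [SigmaFinite ν]
    (b : Fin d → Bool) (k : ℕ) (hk : (univ.filter fun j => b j = true).card = k) :
    Measure.pi (fun _ : Bool × Fin d => ν) {u | F d p b u ≤ x}
      = Measure.pi (fun _ : Bool × Fin d => ν)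
          {u | F d p (fun j => decide ((j : ℕ) < k)) u ≤ x} := by
  classical
  obtain ⟨σ, hσ⟩ := exists_perm d k b hk
  set π : (Bool × Fin d) ≃ (Bool × Fin d) := (Equiv.refl Bool).prodCongr σ with hπ
  have mp := MeasureTheory.measurePreserving_piCongrLeft (fun _ : Bool × Fin d => ν) π
  have hmeas : MeasurableSet {u : Bool × Fin d → ℝ | F d p (fun j => decide ((j : ℕ) < k)) u ≤ x} :=
    measurableSet_le (measurable_F _ _ hp _) measurable_const
  rw [← mp.measure_preimage hmeas.nullMeasurableSet]
  congr 1
  ext u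
  simp only [Set.mem_preimage, Set.mem_setOf_eq]
  have hFu : F d p (fun j => decide ((j : ℕ) < k))
      ((MeasurableEquiv.piCongrLeft (fun _ : Bool × Fin d => ℝ) π) u) = F d p b u := by
    unfold F
    rw [← Equiv.sum_comp σ]
    refine Finset.sum_congr rfl fun j _ => ?_
    have h1 : (MeasurableEquiv.piCongrLeft (fun _ : Bool × Fin d => ℝ) π) u (false, σ j)
        = u (false, j) :=
      MeasurableEquiv.piCongrLeft_apply_apply (β := fun _ : Bool × Fin d => ℝ) π u (false, j)
    have h2 : (MeasurableEquiv.piCongrLeft (fun _ : Bool × Fin d => ℝ) π) u (true, σ j)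
        = u (true, j) :=
      MeasurableEquiv.piCongrLeft_apply_apply (β := fun _ : Bool × Fin d => ℝ) π u (true, j)
    rw [h1, h2]
    congr 1
    simp only [decide_eq_true_eq, hσ j]
  rw [hFu]

end GFGMAux

open GFGMAux


/-- the cdf of the sum of the components of a uniform vector with
GFGM(p) copula depends on the Bernoulli vector `I` only through the distribution
of `Σ_j I_j`:
`P(Σ_j U_{0,j}^(1-p) U_{1,j}^(I_j) ≤ x) = Σ_{k=0}^d P(Σ I_j = k) ·
   P(Σ_{j≤k} U_{0,j}^(1-p) U_{1,j} + Σ_{j>k} U_{0,j}^(1-p) ≤ x)`. -/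
theorem gfgm_sum_cdf_decomposition
    {Ω : Type*} [MeasurableSpace Ω] (μ : Measure Ω) [IsProbabilityMeasure μ]
    (d : ℕ) (hd : 1 ≤ d) (p : ℝ) (hp : p ∈ Set.Ioo (0 : ℝ) 1)
    (U : Bool × Fin d → Ω → ℝ) (hUm : ∀ i, Measurable (U i))
    (hUunif : ∀ i, Measure.map (U i) μ = volume.restrict (Set.Icc (0 : ℝ) 1))
    (hUindep : iIndepFun U μ)
    (I : Ω → Fin d → Bool) (hIm : Measurable I)
    (hUI : IndepFun (fun ω => fun i => U i ω) I μ)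
    (x : ℝ) :
    (μ {ω | ∑ j, U (false, j) ω ^ (1 - p) * (if I ω j then U (true, j) ω else 1) ≤ x}).toReal
      = ∑ k ∈ Finset.range (d + 1),
          (μ {ω | (∑ j, if I ω j then (1 : ℕ) else 0) = k}).toReal *
          (μ {ω | (∑ j ∈ Finset.univ.filter (fun j : Fin d => (j : ℕ) < k),
                      U (false, j) ω ^ (1 - p) * U (true, j) ω)
                  + (∑ j ∈ Finset.univ.filter (fun j : Fin d => k ≤ (j : ℕ)),
                      U (false, j) ω ^ (1 - p)) ≤ x}).toReal := by
  classical
  have hp' : (0 : ℝ) ≤ 1 - p := by linarith [hp.2]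
  set ν : Measure ℝ := volume.restrict (Set.Icc (0 : ℝ) 1) with hν
  have hνprob : IsProbabilityMeasure ν := by
    constructor
    rw [hν, Measure.restrict_apply_univ, Real.volume_Icc]
    norm_num
  set V : Ω → (Bool × Fin d → ℝ) := fun ω i => U i ω with hV
  have hVm : Measurable V := measurable_pi_lambda _ hUm
  -- the joint law of the uniforms is the product measure
  have hlaw : Measure.map V μ = Measure.pi (fun _ : Bool × Fin d => ν) := by
    refine (Measure.pi_eq fun s hs => ?_).symm
    rw [Measure.map_apply hVm (MeasurableSet.univ_pi hs)]
    have hpre : V ⁻¹' Set.pi Set.univ s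
        = ⋂ i ∈ (Finset.univ : Finset (Bool × Fin d)), U i ⁻¹' s i := by
      ext ω; simp [Set.mem_pi, hV]
    rw [hpre, hUindep.measure_inter_preimage_eq_mul Finset.univ (fun i _ => hs i)]
    refine Finset.prod_congr rfl fun i _ => ?_
    rw [← hUunif i, Measure.map_apply (hUm i) (hs i)]
  -- notation
  set bk : ℕ → Fin d → Bool := fun k j => decide ((j : ℕ) < k) with hbk
  set cnt : (Fin d → Bool) → ℕ := fun b => ∑ j, if b j then (1 : ℕ) else 0 with hcnt
  have hcard : ∀ b : Fin d → Bool, (univ.filter fun j => b j = true).card = cnt b := by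
    intro b
    rw [Finset.card_filter]
  have hcnt_le : ∀ b : Fin d → Bool, cnt b ≤ d := by
    intro b
    calc cnt b ≤ ∑ _j : Fin d, 1 := Finset.sum_le_sum fun j _ => by split <;> omega
    _ = d := by simp
  -- measurability of F-sublevel sets
  have hFmeas : ∀ b : Fin d → Bool,
      MeasurableSet {u : Bool × Fin d → ℝ | F d p b u ≤ x} := fun b =>
    measurableSet_le (measurable_F _ _ hp' _) measurable_const
  -- measurability of singletons in the Bernoulli-vector space
  have hsing : ∀ b : Fin d → Bool, MeasurableSet {f : Fin d → Bool | f = b} := by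
    intro b
    have : {f : Fin d → Bool | f = b} = Set.pi Set.univ (fun j => {b j}) := by
      ext f; simp [funext_iff, Set.mem_pi]
    rw [this]
    exact MeasurableSet.univ_pi fun j => MeasurableSet.singleton _
  -- the target probabilities
  set C : ℕ → ENNReal := fun k =>
    μ {ω | (∑ j ∈ Finset.univ.filter (fun j : Fin d => (j : ℕ) < k),
              U (false, j) ω ^ (1 - p) * U (true, j) ω)
          + (∑ j ∈ Finset.univ.filter (fun j : Fin d => k ≤ (j : ℕ)),
              U (false, j) ω ^ (1 - p)) ≤ x} with hC
  have hTset : ∀ k : ℕ, V ⁻¹' {u | F d p (bk k) u ≤ x}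
      = {ω | (∑ j ∈ Finset.univ.filter (fun j : Fin d => (j : ℕ) < k),
              U (false, j) ω ^ (1 - p) * U (true, j) ω)
          + (∑ j ∈ Finset.univ.filter (fun j : Fin d => k ≤ (j : ℕ)),
              U (false, j) ω ^ (1 - p)) ≤ x} := by
    intro k
    ext ω
    simp only [Set.mem_preimage, Set.mem_setOf_eq]
    have hsum : F d p (bk k) (V ω)
        = (∑ j ∈ Finset.univ.filter (fun j : Fin d => (j : ℕ) < k),
              U (false, j) ω ^ (1 - p) * U (true, j) ω)
          + (∑ j ∈ Finset.univ.filter (fun j : Fin d => k ≤ (j : ℕ)),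
              U (false, j) ω ^ (1 - p)) := by
      unfold F
      rw [← Finset.sum_filter_add_sum_filter_not Finset.univ (fun j : Fin d => (j : ℕ) < k)]
      congr 1
      · refine Finset.sum_congr rfl fun j hj => ?_
        rw [Finset.mem_filter] at hj
        simp [hV, hbk, hj.2]
      · rw [show (Finset.univ.filter fun j : Fin d => ¬ (j : ℕ) < k)
            = (Finset.univ.filter fun j : Fin d => k ≤ (j : ℕ)) by
          apply Finset.filter_congr; intro j _; simp [not_lt]]
        refine Finset.sum_congr rfl fun j hj => ?_
        rw [Finset.mem_filter] at hj
        have : ¬ ((j : ℕ) < k) := not_lt.2 hj.2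
        simp [hV, hbk, this]
    rw [hsum]
  -- value of each level-set probability
  have hVb : ∀ b : Fin d → Bool, μ (V ⁻¹' {u | F d p b u ≤ x}) = C (cnt b) := by
    intro b
    have h1 : μ (V ⁻¹' {u | F d p b u ≤ x}) = Measure.map V μ {u | F d p b u ≤ x} :=
      (Measure.map_apply hVm (hFmeas b)).symm
    have h2 : μ (V ⁻¹' {u | F d p (bk (cnt b)) u ≤ x})
        = Measure.map V μ {u | F d p (bk (cnt b)) u ≤ x} :=
      (Measure.map_apply hVm (hFmeas (bk (cnt b)))).symm
    rw [h1, hlaw, pi_measure_F_eq d p x hp' ν b (cnt b) (hcard b), ← hlaw, ← h2, hTset (cnt b)]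
  -- decomposition of the main event over the values of I
  have hsplit : {ω | ∑ j, U (false, j) ω ^ (1 - p) * (if I ω j then U (true, j) ω else 1) ≤ x}
      = ⋃ b : Fin d → Bool, (V ⁻¹' {u | F d p b u ≤ x} ∩ I ⁻¹' {f | f = b}) := by
    ext ω
    simp only [Set.mem_setOf_eq, Set.mem_iUnion, Set.mem_inter_iff, Set.mem_preimage]
    constructor
    · intro h
      exact ⟨I ω, h, rfl⟩
    · rintro ⟨b, h1, h2⟩
      have : F d p b (V ω)
          = ∑ j, U (false, j) ω ^ (1 - p) * (if I ω j then U (true, j) ω else 1) := by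
        unfold F
        refine Finset.sum_congr rfl fun j _ => ?_
        simp [hV, h2]
      rwa [← this]
  have hdisj : Pairwise (Function.onFun Disjoint fun b : Fin d → Bool =>
      V ⁻¹' {u | F d p b u ≤ x} ∩ I ⁻¹' {f | f = b}) := by
    intro b b' hne
    refine Set.disjoint_left.2 ?_
    rintro ω ⟨-, h1⟩ ⟨-, h2⟩
    exact hne ((show I ω = b from h1).symm.trans (show I ω = b' from h2))
  have hmeasb : ∀ b : Fin d → Bool,
      MeasurableSet (V ⁻¹' {u | F d p b u ≤ x} ∩ I ⁻¹' {f | f = b}) := fun b =>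
    (hVm (hFmeas b)).inter (hIm (hsing b))
  -- the key identity in ℝ≥0∞
  have hNset : ∀ k : ℕ, {ω | (∑ j, if I ω j then (1 : ℕ) else 0) = k}
      = ⋃ b ∈ Finset.univ.filter (fun b : Fin d → Bool => cnt b = k), I ⁻¹' {f | f = b} := by
    intro k
    ext ω
    simp only [Set.mem_setOf_eq, Set.mem_iUnion, Finset.mem_filter, Finset.mem_univ, true_and,
      Set.mem_preimage]
    constructor
    · intro h
      exact ⟨I ω, h, rfl⟩
    · rintro ⟨b, h1, h2⟩
      rw [show I ω = b from h2]
      exact h1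
  have key : μ {ω | ∑ j, U (false, j) ω ^ (1 - p) * (if I ω j then U (true, j) ω else 1) ≤ x}
      = ∑ k ∈ Finset.range (d + 1),
          μ {ω | (∑ j, if I ω j then (1 : ℕ) else 0) = k} * C k := by
    rw [hsplit, measure_iUnion hdisj hmeasb, tsum_fintype]
    have hterm : ∀ b : Fin d → Bool,
        μ (V ⁻¹' {u | F d p b u ≤ x} ∩ I ⁻¹' {f | f = b})
          = C (cnt b) * μ (I ⁻¹' {f | f = b}) := by
      intro b
      rw [hUI.measure_inter_preimage_eq_mul _ _ (hFmeas b) (hsing b), hVb b]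
    simp_rw [hterm]
    rw [← Finset.sum_fiberwise_of_maps_to
      (g := cnt) (t := Finset.range (d + 1))
      (fun b _ => Finset.mem_range.2 (Nat.lt_succ_of_le (hcnt_le b)))
      (fun b => C (cnt b) * μ (I ⁻¹' {f | f = b}))]
    refine Finset.sum_congr rfl fun k _ => ?_
    have : ∀ b ∈ Finset.univ.filter (fun b : Fin d → Bool => cnt b = k),
        C (cnt b) * μ (I ⁻¹' {f | f = b}) = C k * μ (I ⁻¹' {f | f = b}) := by
      intro b hb
      rw [Finset.mem_filter] at hb
      rw [hb.2]
    rw [Finset.sum_congr rfl this, ← Finset.mul_sum]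
    rw [hNset k, measure_biUnion_finset ?_ (fun b _ => hIm (hsing b)), mul_comm]
    · intro b hb b' hb' hne
      refine Set.disjoint_left.2 ?_
      rintro ω h1 h2
      exact hne ((show I ω = b from h1).symm.trans (show I ω = b' from h2))
  -- pass to real numbers
  rw [key, ENNReal.toReal_sum (fun k _ => ENNReal.mul_ne_top (measure_ne_top μ _)
    (measure_ne_top μ _))]
  refine Finset.sum_congr rfl fun k _ => ?_
  rw [ENNReal.toReal_mul]
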